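/- Lower bound for the nearest-neighbor probability via a virtual point object on the boundary of the known region: let q_s, q, c_i be points of the plane, r > 0, r_i > 0, let X be uniformly distributed on the closed ball B̄(c_i,r_i) (law U(c_i,r_i)), and let W be any random point whose law ν satisfies ν(Metric.ball q_s r) = 0 (the object lies outside the known region of radius r around q_s). Then (U(c_i,r_i) ⊗ ν) {(u,w) | dist(u,q) < dist(w,q)} ≥ U(c_i,r_i) {u | dist(u,q) < r − dist(q,q_s)}; that is, the probability that o_i is nearer to q than the unknown outside object is at least the probability that the distance from the uniform point of o_i to q is less than r − dist(q,q_s). -/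
import Mathlib


open MeasureTheory
open scoped ENNReal

/-- The uniform probability measure on the closed ball of center `c` and radius `r`
in the Euclidean plane. -/
noncomputable def unifBall (c : EuclideanSpace ℝ (Fin 2)) (r : ℝ) :
    Measure (EuclideanSpace ℝ (Fin 2)) :=
  (volume (Metric.closedBall c r))⁻¹ • volume.restrict (Metric.closedBall c r)

theorem lower_bound_via_virtual_object
    (qs q cᵢ : EuclideanSpace ℝ (Fin 2)) (r rᵢ : ℝ)
    (hr : 0 < r) (hrᵢ : 0 < rᵢ)
    (ν : Measure (EuclideanSpace ℝ (Fin 2))) [IsProbabilityMeasure ν]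
    (hν : ν (Metric.ball qs r) = 0) :
    ((unifBall cᵢ rᵢ).prod ν)
        {uw : EuclideanSpace ℝ (Fin 2) × EuclideanSpace ℝ (Fin 2) |
          dist uw.1 q < dist uw.2 q}
      ≥ unifBall cᵢ rᵢ {u : EuclideanSpace ℝ (Fin 2) | dist u q < r - dist q qs} := by
  set μ := unifBall cᵢ rᵢ
  have hsub : {u : EuclideanSpace ℝ (Fin 2) | dist u q < r - dist q qs} ×ˢ
      (Metric.ball qs r)ᶜ ⊆
      {uw : EuclideanSpace ℝ (Fin 2) × EuclideanSpace ℝ (Fin 2) |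
        dist uw.1 q < dist uw.2 q} := by
    rintro ⟨u, w⟩ ⟨hu, hw⟩
    simp only [Set.mem_compl_iff, Metric.mem_ball, not_lt] at hw
    simp only [Set.mem_setOf_eq] at hu ⊢
    have : r - dist q qs ≤ dist w q := by
      have h1 := dist_triangle w q qs
      have h2 : dist qs q = dist q qs := dist_comm qs q
      linarith
    linarith
  have hν' : ν (Metric.ball qs r)ᶜ = 1 := by
    rw [measure_compl Metric.isOpen_ball.measurableSet (measure_ne_top ν _), hν,
      measure_univ, tsub_zero]
  calc μ {u : EuclideanSpace ℝ (Fin 2) | dist u q < r - dist q qs}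
      = μ {u : EuclideanSpace ℝ (Fin 2) | dist u q < r - dist q qs} *
        ν (Metric.ball qs r)ᶜ := by rw [hν', mul_one]
    _ = (μ.prod ν) ({u : EuclideanSpace ℝ (Fin 2) | dist u q < r - dist q qs} ×ˢ
        (Metric.ball qs r)ᶜ) := (Measure.prod_prod _ _).symm
    _ ≤ _ := measure_mono hsub
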